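/- Fix t ∈ ℝ and s ∈ ℂ with Re(s) > 1. Then Σ_{k=1}^∞ β₀(kt)/k^s = s·∫₁^∞ B_{x,0}(t)/x^s dx, where both the series and the integral converge absolutely, β₀(u) = u - ⌊u⌋ - 1/2 for u ∉ ℤ and β₀(u) = 0 for u ∈ ℤ, and B_{x,0}(t) = (1/x)·Σ_{1 ≤ k ≤ ⌊x⌋} β₀(kt). -/

import Mathlib

open MeasureTheory

noncomputable def beta0 (u : ℝ) : ℝ := if Int.fract u = 0 then 0 else u - ⌊u⌋ - 1/2

noncomputable def B0 (x : ℝ) (t : ℝ) : ℝ :=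
  (1/x) * ∑ k ∈ Finset.Icc 1 ⌊x⌋₊, beta0 (k * t)

lemma abs_beta0_le (u : ℝ) : |beta0 u| ≤ 1/2 := by
  unfold beta0
  split_ifs with h
  · norm_num
  · have h1 : u - ⌊u⌋ - 1/2 = Int.fract u - 1/2 := by rw [Int.fract]
    rw [h1, abs_le]
    have h2 := Int.fract_nonneg u
    have h3 := Int.fract_lt_one u
    constructor <;> linarith

lemma beta0_zero : beta0 0 = 0 := by simp [beta0]

/-- auxiliary integrand -/
noncomputable def auxg (t : ℝ) (s : ℂ) (k : ℕ) : ℝ → ℂ :=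
  Set.indicator (Set.Ioi (k:ℝ)) (fun x => (beta0 (k * t) : ℂ) * (x:ℂ)^(-s-1))

theorem stmt_16 (t : ℝ) (s : ℂ) (hs : 1 < s.re) :
    Summable (fun k : ℕ+ => ‖(beta0 (k * t) : ℂ) / (k : ℂ) ^ s‖) ∧
    IntegrableOn (fun x : ℝ => (B0 x t : ℂ) / (x : ℂ) ^ s) (Set.Ioi 1) ∧
    ∑' k : ℕ+, (beta0 (k * t) : ℂ) / (k : ℂ) ^ s
      = s * ∫ x in Set.Ioi (1:ℝ), (B0 x t : ℂ) / (x : ℂ) ^ s := by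
  have hs0 : s ≠ 0 := by
    intro h; rw [h] at hs; simp at hs; linarith
  have hre : (-s-1).re < -1 := by
    simp only [Complex.sub_re, Complex.neg_re, Complex.one_re]; linarith
  set a : ℕ → ℝ := fun k => beta0 (k * t) with ha
  have ha0 : a 0 = 0 := by simp [ha, beta0_zero]
  have habd : ∀ k : ℕ, ‖(a k : ℂ)‖ ≤ 1/2 := fun k => by
    rw [Complex.norm_real, Real.norm_eq_abs]; exact abs_beta0_le _
  -- Summability over ℕ
  have hsumN : Summable (fun n : ℕ => ‖(a n : ℂ) / (n:ℂ)^s‖) := by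
    have h1 : Summable (fun n : ℕ => 1/2 * ‖1/(n:ℂ)^s‖) :=
      (summable_norm_iff.mpr (Complex.summable_one_div_nat_cpow.mpr hs)).mul_left _
    refine Summable.of_nonneg_of_le (fun n => norm_nonneg _) (fun n => ?_) h1
    rw [norm_div, norm_div, norm_one, mul_one_div]
    rcases (norm_nonneg ((n:ℂ)^s)).eq_or_lt with h|h
    · simp [← h]
    · exact (div_le_div_iff_of_pos_right h).mpr (habd n)
  have hS1 : Summable (fun k : ℕ+ => ‖(beta0 (k * t) : ℂ) / (k : ℂ) ^ s‖) :=
    hsumN.comp_injective PNat.coe_injective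
  -- integrability of each auxg
  have hintg : ∀ k : ℕ, Integrable (auxg t s k) (volume.restrict (Set.Ioi (1:ℝ))) := fun k =>
    ((integrableOn_Ioi_cpow_of_lt hre one_pos).const_mul _).indicator measurableSet_Ioi
  -- value of norm integrals
  have hnormval : ∀ k : ℕ, 1 ≤ k →
      (∫ x in Set.Ioi (1:ℝ), ‖auxg t s k x‖) = |a k| * ((k:ℝ)^(-s.re) / s.re) := by
    intro k hk
    have hk0 : (0:ℝ) < (k:ℝ) := by exact_mod_cast hk
    have h1k : (1:ℝ) ≤ (k:ℝ) := by exact_mod_cast hk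
    have hsub : Set.Ioi (k:ℝ) ∩ Set.Ioi 1 = Set.Ioi (k:ℝ) :=
      Set.inter_eq_left.mpr (Set.Ioi_subset_Ioi h1k)
    calc (∫ x in Set.Ioi (1:ℝ), ‖auxg t s k x‖)
        = ∫ x in Set.Ioi (1:ℝ),
            Set.indicator (Set.Ioi (k:ℝ)) (fun x => ‖(a k:ℂ) * (x:ℂ)^(-s-1)‖) x := by
          refine integral_congr_ae (Filter.Eventually.of_forall fun x => ?_)
          exact norm_indicator_eq_indicator_norm _ _
      _ = ∫ x in Set.Ioi (k:ℝ), ‖(a k:ℂ) * (x:ℂ)^(-s-1)‖ := by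
          rw [integral_indicator measurableSet_Ioi,
            Measure.restrict_restrict measurableSet_Ioi, hsub]
      _ = ∫ x in Set.Ioi (k:ℝ), |a k| * x^(-s.re-1) := by
          refine setIntegral_congr_fun measurableSet_Ioi (fun x hx => ?_)
          have hx0 : (0:ℝ) < x := lt_trans hk0 hx
          rw [norm_mul, Complex.norm_real, Real.norm_eq_abs,
            Complex.norm_cpow_eq_rpow_re_of_pos hx0]
          have hres : (-s-1).re = -s.re - 1 := by
            simp [Complex.sub_re, Complex.neg_re]
          rw [hres]
      _ = |a k| * ((k:ℝ)^(-s.re)/s.re) := by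
          rw [integral_const_mul, integral_Ioi_rpow_of_lt (by linarith) hk0]
          congr 1
          rw [show -s.re - 1 + 1 = -s.re by ring, neg_div_neg_eq]
  -- summability of norm integrals
  have hnormsum : Summable (fun k : ℕ => ∫ x in Set.Ioi (1:ℝ), ‖auxg t s k x‖) := by
    have hmaj : Summable (fun k : ℕ => 1/2 * ((k:ℝ)^(-s.re) / s.re)) := by
      have h := (Real.summable_nat_rpow (p := -s.re)).mpr (by linarith)
      exact (h.div_const _).mul_left _
    refine Summable.of_nonneg_of_le (fun k => ?_) (fun k => ?_) hmaj
    · exact integral_nonneg fun x => norm_nonneg _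
    · rcases Nat.eq_zero_or_pos k with rfl|hk
      · have hg0 : auxg t s 0 = fun _ => 0 := by
          funext x
          simp only [auxg, Nat.cast_zero, zero_mul, beta0_zero, Complex.ofReal_zero, zero_mul]
          simp
        rw [hg0]
        simp only [norm_zero, integral_zero]
        apply mul_nonneg (by norm_num)
        exact div_nonneg (Real.rpow_nonneg (by norm_num) _) (by linarith)
      · rw [hnormval k hk]
        apply mul_le_mul_of_nonneg_right
        · rw [← Real.norm_eq_abs, ← Complex.norm_real]; exact habd k
        · exact div_nonneg (Real.rpow_nonneg (Nat.cast_nonneg k) _) (by linarith)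
  -- value of complex integrals
  have hval : ∀ k : ℕ, (∫ x in Set.Ioi (1:ℝ), auxg t s k x) = (a k : ℂ) * ((k:ℂ)^(-s) / s) := by
    intro k
    rcases Nat.eq_zero_or_pos k with rfl|hk
    · have hg0 : auxg t s 0 = fun _ => 0 := by
        funext x
        simp only [auxg, Nat.cast_zero, zero_mul, beta0_zero, Complex.ofReal_zero]
        simp
      rw [hg0]
      simp [ha0]
    · have hk0 : (0:ℝ) < (k:ℝ) := by exact_mod_cast hk
      have h1k : (1:ℝ) ≤ (k:ℝ) := by exact_mod_cast hk
      have hsub : Set.Ioi (k:ℝ) ∩ Set.Ioi 1 = Set.Ioi (k:ℝ) :=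
        Set.inter_eq_left.mpr (Set.Ioi_subset_Ioi h1k)
      rw [show auxg t s k = Set.indicator (Set.Ioi (k:ℝ))
            (fun x => (a k : ℂ) * (x:ℂ)^(-s-1)) from rfl,
        integral_indicator measurableSet_Ioi, Measure.restrict_restrict measurableSet_Ioi, hsub,
        integral_const_mul, integral_Ioi_cpow_of_lt hre hk0]
      congr 1
      rw [show -s - 1 + 1 = -s by ring, neg_div_neg_eq]
      norm_cast
  -- a.e. identity on Ioi 1
  have hae : ∀ᵐ x ∂(volume.restrict (Set.Ioi (1:ℝ))),
      (B0 x t : ℂ) / (x:ℂ)^s = ∑' k : ℕ, auxg t s k x := by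
    have hcnt : ∀ᵐ x : ℝ, x ∉ Set.range ((↑) : ℕ → ℝ) :=
      (Set.countable_range _).ae_notMem _
    filter_upwards [ae_restrict_mem measurableSet_Ioi, ae_restrict_of_ae hcnt] with x hx hx'
    have hx1 : (1:ℝ) < x := hx
    have hx0 : (0:ℝ) < x := by linarith
    have hxC : (x:ℂ) ≠ 0 := by
      simpa using hx0.ne'
    have hxs : (x:ℂ)^s ≠ 0 := fun h => hxC ((Complex.cpow_eq_zero_iff _ _).mp h).1
    have hts : ∑' k : ℕ, auxg t s k x = ∑ k ∈ Finset.range (⌊x⌋₊ + 1), auxg t s k x := by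
      refine tsum_eq_sum (fun k hk => ?_)
      simp only [Finset.mem_range, not_lt] at hk
      apply Set.indicator_of_notMem
      simp only [Set.mem_Ioi, not_lt]
      calc x ≤ ⌊x⌋₊ + 1 := (Nat.lt_floor_add_one x).le
        _ ≤ k := by exact_mod_cast hk
    have hterm : ∀ k ∈ Finset.range (⌊x⌋₊+1), auxg t s k x = (a k : ℂ) * (x:ℂ)^(-s-1) := by
      intro k hk
      simp only [Finset.mem_range] at hk
      apply Set.indicator_of_mem
      have hkle : k ≤ ⌊x⌋₊ := Nat.lt_succ_iff.mp hk
      have hkx : (k:ℝ) ≤ x :=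
        le_trans (by exact_mod_cast hkle : (k:ℝ) ≤ (⌊x⌋₊:ℝ)) (Nat.floor_le hx0.le)
      have hne : (k:ℝ) ≠ x := fun h => hx' ⟨k, h⟩
      exact lt_of_le_of_ne hkx hne
    rw [hts, Finset.sum_congr rfl hterm, ← Finset.sum_mul]
    have hsum_eq : ∑ k ∈ Finset.range (⌊x⌋₊+1), (a k : ℂ) = ∑ k ∈ Finset.Icc 1 ⌊x⌋₊, (a k : ℂ) := by
      refine (Finset.sum_subset (fun k hk => ?_) (fun k hk1 hk2 => ?_)).symm
      · simp only [Finset.mem_Icc] at hk; simp only [Finset.mem_range]; omega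
      · have hk0' : k = 0 := by
          simp only [Finset.mem_range] at hk1
          simp only [Finset.mem_Icc, not_and, not_le] at hk2
          omega
        rw [hk0', ha0]; simp
    rw [hsum_eq]
    have hB : (B0 x t : ℂ) = (1/(x:ℂ)) * ∑ k ∈ Finset.Icc 1 ⌊x⌋₊, (a k : ℂ) := by
      rw [B0]
      push_cast
      ring
    rw [hB, show -s - 1 = -s + (-1) by ring, Complex.cpow_add _ _ hxC, Complex.cpow_neg,
      Complex.cpow_neg_one]
    rw [div_eq_mul_inv, one_div]
    ring
  -- measurability of the integrand
  have hmeasI : Measurable (fun x : ℝ => (B0 x t : ℂ) / (x:ℂ)^s) := by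
    apply Measurable.div
    · apply Complex.measurable_ofReal.comp
      simp only [B0]
      apply Measurable.mul
      · exact measurable_const.div measurable_id
      · exact (measurable_from_nat
          (f := fun n => ∑ k ∈ Finset.Icc 1 n, beta0 (k * t))).comp Nat.measurable_floor
    · exact Complex.measurable_ofReal.pow measurable_const
  -- integrability
  have hInt : IntegrableOn (fun x : ℝ => (B0 x t : ℂ) / (x:ℂ)^s) (Set.Ioi 1) := by
    have hbint : IntegrableOn (fun x : ℝ => 1/2 * x^(-s.re)) (Set.Ioi (1:ℝ)) :=
      (integrableOn_Ioi_rpow_of_lt (by linarith) one_pos).const_mul _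
    refine Integrable.mono' hbint hmeasI.aestronglyMeasurable ?_
    filter_upwards [ae_restrict_mem measurableSet_Ioi] with x hx
    have hx1 : (1:ℝ) < x := hx
    have hx0 : (0:ℝ) < x := by linarith
    rw [norm_div]
    have h1 : ‖(x:ℂ)^s‖ = x^(s.re) := by
      rw [Complex.norm_cpow_eq_rpow_re_of_pos hx0]
    have h2 : ‖(B0 x t : ℂ)‖ ≤ 1/2 := by
      rw [Complex.norm_real, Real.norm_eq_abs, B0, abs_mul,
        abs_of_pos (by positivity : (0:ℝ) < 1/x)]
      have hcard : ((Finset.Icc 1 ⌊x⌋₊).card : ℝ) = (⌊x⌋₊ : ℝ) := by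
        rw [Nat.card_Icc]; norm_num
      have hsum : |∑ k ∈ Finset.Icc 1 ⌊x⌋₊, beta0 (k*t)| ≤ (⌊x⌋₊:ℝ) * (1/2) := by
        calc |∑ k ∈ Finset.Icc 1 ⌊x⌋₊, beta0 (k*t)|
            ≤ ∑ k ∈ Finset.Icc 1 ⌊x⌋₊, |beta0 (k*t)| := Finset.abs_sum_le_sum_abs _ _
          _ ≤ ∑ _k ∈ Finset.Icc 1 ⌊x⌋₊, 1/2 := Finset.sum_le_sum (fun k _ => abs_beta0_le _)
          _ = ((Finset.Icc 1 ⌊x⌋₊).card : ℝ) * (1/2) := by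
              rw [Finset.sum_const, nsmul_eq_mul]
          _ = (⌊x⌋₊:ℝ) * (1/2) := by rw [hcard]
      have hfl : (⌊x⌋₊:ℝ) ≤ x := Nat.floor_le hx0.le
      calc (1/x) * |∑ k ∈ Finset.Icc 1 ⌊x⌋₊, beta0 (k*t)|
          ≤ (1/x) * ((⌊x⌋₊:ℝ) * (1/2)) := by
            exact mul_le_mul_of_nonneg_left hsum (by positivity)
        _ ≤ (1/x) * (x * (1/2)) := by
            apply mul_le_mul_of_nonneg_left _ (by positivity)
            exact mul_le_mul_of_nonneg_right hfl (by norm_num)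
        _ = 1/2 := by field_simp
    rw [h1]
    calc ‖(B0 x t : ℂ)‖ / x^(s.re) ≤ (1/2) / x^(s.re) := by
          exact div_le_div_of_nonneg_right h2 (Real.rpow_pos_of_pos hx0 _).le
      _ = 1/2 * x^(-s.re) := by
          rw [Real.rpow_neg hx0.le, div_eq_mul_inv]
  refine ⟨hS1, hInt, ?_⟩
  -- exchange sum and integral
  have hIT : ∑' k : ℕ, (∫ x in Set.Ioi (1:ℝ), auxg t s k x)
      = ∫ x in Set.Ioi (1:ℝ), ∑' k : ℕ, auxg t s k x :=
    integral_tsum_of_summable_integral_norm hintg hnormsum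
  have hRHS : (∫ x in Set.Ioi (1:ℝ), (B0 x t : ℂ) / (x:ℂ)^s)
      = ∑' k : ℕ, (∫ x in Set.Ioi (1:ℝ), auxg t s k x) := by
    rw [hIT]
    exact integral_congr_ae hae
  rw [hRHS]
  have hL : ∑' k : ℕ+, (beta0 (k * t) : ℂ) / (k : ℂ) ^ s
      = ∑' n : ℕ, (a n : ℂ) / (n:ℂ)^s := by
    have hsupp : Function.support (fun n : ℕ => ((a n : ℝ) : ℂ) / (n:ℂ)^s)
        ⊆ Set.range ((↑) : ℕ+ → ℕ) := by
      intro n hn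
      rcases Nat.eq_zero_or_pos n with rfl|hn'
      · exfalso
        apply hn
        simp [ha0]
      · exact ⟨⟨n, hn'⟩, rfl⟩
    exact Function.Injective.tsum_eq PNat.coe_injective hsupp
  rw [hL, tsum_congr hval, ← tsum_mul_left]
  refine tsum_congr (fun k => ?_)
  rw [Complex.cpow_neg]
  have hss := mul_inv_cancel₀ hs0
  calc (a k : ℂ) / (k:ℂ)^s = (a k : ℂ) * ((k:ℂ)^s)⁻¹ * 1 := by
        rw [div_eq_mul_inv, mul_one]
    _ = (a k : ℂ) * ((k:ℂ)^s)⁻¹ * (s * s⁻¹) := by rw [hss]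
    _ = s * ((a k : ℂ) * (((k:ℂ)^s)⁻¹ / s)) := by rw [div_eq_mul_inv]; ring
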